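/- For probability measures P and Q on a measurable space (Ω, H) with P ≪ Q, the supremum over measurable sets A of P(A)/Q(A) equals the essential supremum (with respect to Q) of the Radon–Nikodym derivative dP/dQ. -/
import Mathlib

open MeasureTheory

theorem renyi_inf_sup_ratio_eq_essSup_rnDeriv
    {Ω : Type*} [MeasurableSpace Ω] (P Q : Measure Ω)
    [IsProbabilityMeasure P] [IsProbabilityMeasure Q] (h : P ≪ Q) :
    (⨆ (A : Set Ω) (_ : MeasurableSet A), P A / Q A) = essSup (P.rnDeriv Q) Q := by
  apply le_antisymm
  · refine iSup₂_le fun A hA => ?_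
    rcases eq_or_ne (Q A) 0 with hQ | hQ
    · have hP : P A = 0 := h hQ
      simp [hP]
    · rw [ENNReal.div_le_iff hQ (measure_ne_top Q A)]
      calc P A = ∫⁻ x in A, P.rnDeriv Q x ∂Q := (Measure.setLIntegral_rnDeriv h A).symm
        _ ≤ ∫⁻ _ in A, essSup (P.rnDeriv Q) Q ∂Q :=
            lintegral_mono_ae (ae_restrict_of_ae (ENNReal.ae_le_essSup _))
        _ = essSup (P.rnDeriv Q) Q * Q A := by rw [setLIntegral_const]
  · refine le_of_forall_lt fun c hc => ?_
    obtain ⟨c', hcc', hc'⟩ := exists_between hc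
    set A := {x | c' < P.rnDeriv Q x} with hAdef
    have hA : MeasurableSet A := measurableSet_lt measurable_const (Measure.measurable_rnDeriv P Q)
    have hQA : Q A ≠ 0 := by
      intro h0
      have : essSup (P.rnDeriv Q) Q ≤ c' := essSup_le_of_ae_le c' (by
        rw [Filter.EventuallyLE, ae_iff]
        simpa [hAdef, not_le] using h0)
      exact absurd (hc'.trans_le this) (lt_irrefl c')
    have hle : c' * Q A ≤ P A := by
      calc c' * Q A = ∫⁻ _ in A, c' ∂Q := (setLIntegral_const _ _).symm
        _ ≤ ∫⁻ x in A, P.rnDeriv Q x ∂Q :=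
            lintegral_mono_ae ((ae_restrict_mem hA).mono fun x hx => le_of_lt hx)
        _ = P A := Measure.setLIntegral_rnDeriv h A
    have : c' ≤ P A / Q A := by
      rw [ENNReal.le_div_iff_mul_le (Or.inl hQA) (Or.inr (measure_ne_top P A))]
      exact hle
    calc c < c' := hcc'
      _ ≤ P A / Q A := this
      _ ≤ _ := le_iSup₂ (f := fun A (_ : MeasurableSet A) => P A / Q A) A hA
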